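/- arXiv:1401.6976 — 7 statements merged into one kernel-verified Lean document; each statement's English description precedes it below -/
import Mathlib

section
/- Let c ∈ (0, c_crit), let I ⊆ ℝ be an open interval containing -c/2, and let f : I → ℝ be a solution of Jang's equation on L_c with f(-c/2) = f'(-c/2) = 0. Then the function h : γ(I) → ℝ defined by h(s) = f'(γ⁻¹(s)) / √(1 + f'(γ⁻¹(s))²), where γ(u) = (2/c)u + 1 and γ⁻¹(s) = c(s-1)/2, is a solution of the transformed Jang equation dh/ds = F_c(s, h(s)) on γ(I), satisfies h(0) = 0, and satisfies |h(s)| < 1 for all s ∈ γ(I). -/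
/-- The function `φ(r) = e^{r/(2m)-1}(r - 2m)` defining the Kruskal radius implicitly. -/
noncomputable def phi (m r : ℝ) : ℝ := Real.exp (r / (2*m) - 1) * (r - 2*m)

/-- The derivative `φ_r(r) = (r/(2m)) e^{r/(2m)-1}`. -/
noncomputable def phiR (m r : ℝ) : ℝ := (r / (2*m)) * Real.exp (r / (2*m) - 1)

/-- The critical parameter `c_crit = √(8m/e)`. -/
noncomputable def cCrit (m : ℝ) : ℝ := Real.sqrt (8*m / Real.exp 1)

/-- The right-hand side of Jang's equation on the slice `L_c`:
`f''(u) = jangRHS m c u r (f'(u))` where `r = r(u)` solves `φ(r) = u(u+c)`. -/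
noncomputable def jangRHS (m c u r p : ℝ) : ℝ :=
  c * Real.sqrt (2*m / phiR m r + p^2/4) *
      ((1 / phiR m r) * (1/(2*m) - 3/r) - p^2/(2*m*r))
    - ((2*u + c)/(4*m*r)) * p^3
    - ((2*u + c)/(2 * phiR m r)) * (1/(2*m) + 5/r) * p

/-- The right-hand side `F_c(s,h)` of the transformed Jang equation,
with `r = r_c(s)` solving `φ(r) = (c²/4)(s²-1)`. -/
noncomputable def Fc (m c s r h : ℝ) : ℝ :=
  (c^2/2) * Real.sqrt (2*m*(1 - h^2) / phiR m r + h^2/4) *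
      (((1 - h^2) / phiR m r) * (1/(2*m) - 3/r) - h^2/(2*m*r))
    - (c^2*s/(8*m*r)) * h^3
    - (c^2*s/(4 * phiR m r)) * (1/(2*m) + 5/r) * (h*(1 - h^2))

lemma phi_hasDerivAt (m r : ℝ) (hm : 0 < m) :
    HasDerivAt (phi m) (Real.exp (r / (2*m) - 1) * (r / (2*m))) r := by
  have h1 : HasDerivAt (fun x : ℝ => x / (2*m) - 1) (1/(2*m)) r :=
    ((hasDerivAt_id r).div_const (2*m)).sub_const 1
  have h4 := h1.exp.mul ((hasDerivAt_id r).sub_const (2*m))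
  refine h4.congr_deriv ?_
  simp only [id_eq]
  field_simp
  ring

lemma phi_injOn (m : ℝ) (hm : 0 < m) : Set.InjOn (phi m) (Set.Ioi 0) := by
  refine (strictMonoOn_of_deriv_pos (convex_Ioi 0) ?_ ?_).injOn
  · exact fun r _ => (phi_hasDerivAt m r hm).continuousAt.continuousWithinAt
  · intro r hr
    rw [interior_Ioi] at hr
    rw [(phi_hasDerivAt m r hm).deriv]
    have : (0:ℝ) < r := hr
    positivity

lemma key (m c s r p : ℝ) (hm : 0 < m) (hr : 0 < r) :
    Fc m c s r (p / Real.sqrt (1+p^2)) =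
      jangRHS m c (c*(s-1)/2) r p * (c/2) / (Real.sqrt (1+p^2))^3 := by
  have hF : 0 < phiR m r := by unfold phiR; positivity
  set q := Real.sqrt (1+p^2) with hqdef
  have hq0 : 0 < q := Real.sqrt_pos.2 (by positivity)
  have hq2 : q^2 = 1 + p^2 := Real.sq_sqrt (by positivity)
  have hsub : 1 - (p/q)^2 = 1/q^2 := by
    rw [div_pow, hq2]; field_simp; ring
  unfold Fc jangRHS
  rw [hsub]
  have harg : 2*m*(1/q^2) / phiR m r + (p/q)^2/4 = (2*m / phiR m r + p^2/4)/q^2 := by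
    field_simp
  rw [harg, Real.sqrt_div (by positivity) (q^2), Real.sqrt_sq hq0.le]
  field_simp
  ring

/-- If `f` solves Jang's equation on an open interval `I ∋ -c/2` with
`f(-c/2) = f'(-c/2) = 0`, then `h(s) = f'(γ⁻¹(s))/√(1 + f'(γ⁻¹(s))²)` (with
`γ⁻¹(s) = c(s-1)/2`) solves the transformed Jang equation on `γ(I)`, satisfies
`h(0) = 0`, and `|h(s)| < 1` there. -/
theorem jang_to_transformed (m c : ℝ) (hm : 0 < m) (hc : c ∈ Set.Ioo 0 (cCrit m))
    (R Rc : ℝ → ℝ)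
    (hR : ∀ u, 0 < R u ∧ phi m (R u) = u * (u + c))
    (hRc : ∀ s, 0 < Rc s ∧ phi m (Rc s) = c^2/4 * (s^2 - 1))
    (I : Set ℝ) (hIopen : IsOpen I) (hIconn : I.OrdConnected) (hmem : -c/2 ∈ I)
    (f f' : ℝ → ℝ)
    (hf : ∀ u ∈ I, HasDerivAt f (f' u) u)
    (hf' : ∀ u ∈ I, HasDerivAt f' (jangRHS m c u (R u) (f' u)) u)
    (hinit : f (-c/2) = 0) (hinit' : f' (-c/2) = 0) :
    (fun s => f' (c*(s-1)/2) / Real.sqrt (1 + (f' (c*(s-1)/2))^2)) 0 = 0 ∧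
    ∀ s, c*(s-1)/2 ∈ I →
      HasDerivAt (fun t => f' (c*(t-1)/2) / Real.sqrt (1 + (f' (c*(t-1)/2))^2))
        (Fc m c s (Rc s) (f' (c*(s-1)/2) / Real.sqrt (1 + (f' (c*(s-1)/2))^2))) s ∧
      |f' (c*(s-1)/2) / Real.sqrt (1 + (f' (c*(s-1)/2))^2)| < 1 := by
  constructor
  · have h0 : c*((0:ℝ)-1)/2 = -c/2 := by ring
    simp only [h0, hinit']
    simp
  · intro s hs
    set u := c*(s-1)/2 with hu
    set p := f' u with hp
    have hq0 : 0 < Real.sqrt (1+p^2) := Real.sqrt_pos.2 (by positivity)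
    set q := Real.sqrt (1+p^2) with hqdef
    have hq2 : q^2 = 1 + p^2 := Real.sq_sqrt (by positivity)
    -- R u = Rc s
    have hrEq : R u = Rc s := by
      apply phi_injOn m hm (hR u).1 (hRc s).1
      rw [(hR u).2, (hRc s).2, hu]; ring
    -- derivative of inner map
    have hγ : HasDerivAt (fun t : ℝ => c*(t-1)/2) (c/2) s := by
      have := (((hasDerivAt_id s).sub_const 1).const_mul c).div_const 2
      simpa using this
    have hA : HasDerivAt (fun t => f' (c*(t-1)/2)) (jangRHS m c u (R u) p * (c/2)) s := by
      have := (hf' u hs).comp s hγ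
      exact this
    set A := jangRHS m c u (R u) p * (c/2) with hAdef
    have hden : HasDerivAt (fun t => Real.sqrt (1 + (f' (c*(t-1)/2))^2))
        ((2 * p * A) / (2 * q)) s := by
      have h1 : HasDerivAt (fun t => 1 + (f' (c*(t-1)/2))^2) (2 * p * A) s := by
        have := (hA.pow 2).const_add 1
        simpa [hu, hp, mul_comm, mul_assoc] using this
      have := h1.sqrt (by positivity)
      simpa [hu, hp] using this
    have hdiv := hA.div hden (by rw [← hqdef]; exact hq0.ne')
    have hval : (A * q - p * ((2 * p * A) / (2 * q))) / q^2 = A / q^3 := by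
      field_simp
      linear_combination A * hq2
    constructor
    · refine hdiv.congr_deriv ?_
      rw [hval, hAdef, key m c s (Rc s) p hm (hRc s).1, hrEq]
    · rw [abs_div, abs_of_pos hq0, div_lt_one hq0]
      have : |p| = Real.sqrt (p^2) := (Real.sqrt_sq_eq_abs p).symm
      rw [this]
      exact Real.sqrt_lt_sqrt (sq_nonneg p) (by linarith)
end

section
/- Let c ∈ (0, c_crit). Suppose h : J → ℝ is a solution of the transformed Jang equation on an interval J containing 0, with h(0) = 0, and suppose |h(s*)| = 1 for some s* ∈ J. Then there is no solution f : ℝ → ℝ of Jang's equation on L_c defined on all of ℝ with f(-c/2) = f'(-c/2) = 0; that is, the maximal solution f_c of Jang's equation with these initial conditions is not global. -/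
open Set Real Topology

lemma phiR_pos {m r : ℝ} (hm : 0 < m) (hr : 0 < r) : 0 < phiR m r := by
  unfold phiR; positivity

lemma hasDerivAt_phi {m : ℝ} (hm : 0 < m) (r : ℝ) : HasDerivAt (phi m) (phiR m r) r := by
  have h1 : HasDerivAt (fun x : ℝ => x / (2*m) - 1) (1/(2*m)) r := by
    simpa using ((hasDerivAt_id r).div_const (2*m)).sub_const 1
  have h2 : HasDerivAt (fun x : ℝ => Real.exp (x / (2*m) - 1))
      (Real.exp (r/(2*m) - 1) * (1/(2*m))) r := (Real.hasDerivAt_exp _).comp r h1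
  have h3 : HasDerivAt (fun x : ℝ => x - 2*m) 1 r := (hasDerivAt_id r).sub_const (2*m)
  have := h2.mul h3
  refine this.congr_deriv ?_
  unfold phiR
  have hm' : (2:ℝ)*m ≠ 0 := by positivity
  field_simp
  ring

lemma phi_strictMonoOn {m : ℝ} (hm : 0 < m) : StrictMonoOn (phi m) (Set.Ioi 0) := by
  apply strictMonoOn_of_hasDerivWithinAt_pos (convex_Ioi 0)
    (fun r _ => (hasDerivAt_phi hm r).continuousAt.continuousWithinAt)
    (f' := phiR m)
  · intro r _
    exact (hasDerivAt_phi hm r).hasDerivWithinAt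
  · intro r hr
    rw [interior_Ioi] at hr
    exact phiR_pos hm hr

lemma phi_inj {m r₁ r₂ : ℝ} (hm : 0 < m) (h1 : 0 < r₁) (h2 : 0 < r₂)
    (he : phi m r₁ = phi m r₂) : r₁ = r₂ :=
  (phi_strictMonoOn hm).injOn h1 h2 he

lemma phi_le_iff {m r₁ r₂ : ℝ} (hm : 0 < m) (h1 : 0 < r₁) (h2 : 0 < r₂) :
    phi m r₁ ≤ phi m r₂ ↔ r₁ ≤ r₂ :=
  (phi_strictMonoOn hm).le_iff_le h1 h2

/-- The key algebraic identity relating `Fc` and `jangRHS` under the substitution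
`h = p/√(1+p²)`, `s = 2u/c + 1`. -/
lemma Fc_of_jang {m r : ℝ} (hm : 0 < m) (hr : 0 < r) (c s p : ℝ) :
    Fc m c s r (p / Real.sqrt (1 + p^2)) =
      (c/2) * jangRHS m c (c*(s-1)/2) r p / ((1 + p^2) * Real.sqrt (1 + p^2)) := by
  have hfr : 0 < phiR m r := phiR_pos hm hr
  have hp1 : (0:ℝ) < 1 + p^2 := by positivity
  set Q := Real.sqrt (1 + p^2) with hQdef
  have hQpos : 0 < Q := Real.sqrt_pos.2 hp1
  have hQ2 : Q^2 = 1 + p^2 := Real.sq_sqrt hp1.le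
  have harg : 2*m*(1 - (p/Q)^2) / phiR m r + (p/Q)^2/4
      = (2*m/phiR m r + p^2/4) / (1 + p^2) := by
    rw [div_pow, hQ2]
    field_simp
    ring
  have hX : (0:ℝ) ≤ 2*m/phiR m r + p^2/4 := by positivity
  unfold Fc jangRHS
  rw [harg, Real.sqrt_div hX, ← hQdef]
  have h2u : 2*(c*(s-1)/2) + c = c*s := by ring
  rw [h2u]
  set S := Real.sqrt (2*m/phiR m r + p^2/4) with hSdef
  rw [div_pow, div_pow, hQ2]
  field_simp
  ring_nf
  linear_combination (32*c^2*p^3*phiR m r*s) * hQ2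

/-- Symmetry of `Fc` under `(s,h) ↦ (-s,-h)`. -/
lemma Fc_neg (m c s r x : ℝ) : Fc m c (-s) r (-x) = Fc m c s r x := by
  unfold Fc
  ring_nf

lemma hasDerivAt_qfun (x : ℝ) :
    HasDerivAt (fun x : ℝ => x / Real.sqrt (1+x^2)) (1/((1+x^2) * Real.sqrt (1+x^2))) x := by
  have h0 : (0:ℝ) < 1 + x^2 := by positivity
  have hs0 : 0 < Real.sqrt (1+x^2) := Real.sqrt_pos.2 h0
  have h1 : HasDerivAt (fun x : ℝ => 1+x^2) (2*x) x := by
    simpa using ((hasDerivAt_pow 2 x).const_add 1)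
  have h2 : HasDerivAt (fun x : ℝ => Real.sqrt (1+x^2)) (1/(2*Real.sqrt (1+x^2)) * (2*x)) x :=
    (Real.hasDerivAt_sqrt h0.ne').comp x h1
  have h3 := (hasDerivAt_id x).div h2 hs0.ne'
  refine h3.congr_deriv ?_
  have hsq : Real.sqrt (1+x^2)^2 = 1+x^2 := Real.sq_sqrt h0.le
  rw [hsq]
  field_simp
  simp only [id]
  linear_combination hsq

lemma abs_qfun_lt_one (x : ℝ) : |x / Real.sqrt (1+x^2)| < 1 := by
  have h0 : (0:ℝ) < 1 + x^2 := by positivity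
  have hs0 : 0 < Real.sqrt (1+x^2) := Real.sqrt_pos.2 h0
  rw [abs_div, abs_of_pos hs0, div_lt_one hs0]
  calc |x| = Real.sqrt (x^2) := (Real.sqrt_sq_eq_abs x).symm
    _ < Real.sqrt (1+x^2) := Real.sqrt_lt_sqrt (sq_nonneg x) (by linarith)

/-- A `C¹` function on an open set is Lipschitz on any compact convex subset. -/
lemma exists_lipschitzOnWith_of_contDiffAt {E F : Type*} [NormedAddCommGroup E]
    [NormedSpace ℝ E] [NormedAddCommGroup F] [NormedSpace ℝ F]
    {G : E → F} {U K : Set E} (hU : IsOpen U) (hG : ∀ x ∈ U, ContDiffAt ℝ 1 G x)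
    (hKU : K ⊆ U) (hK : IsCompact K) (hconv : Convex ℝ K) :
    ∃ L : NNReal, LipschitzOnWith L G K := by
  have hGU : ContDiffOn ℝ 1 G U := fun x hx => (hG x hx).contDiffWithinAt
  have hd : ContinuousOn (fderiv ℝ G) U := hGU.continuousOn_fderiv_of_isOpen hU le_rfl
  obtain ⟨C, hC⟩ := hK.exists_bound_of_continuousOn (hd.mono hKU)
  refine ⟨⟨max C 0, le_max_right _ _⟩, ?_⟩
  apply hconv.lipschitzOnWith_of_nnnorm_hasFDerivWithin_le (f' := fderiv ℝ G)
  · intro x hx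
    exact (((hG x (hKU hx)).differentiableAt one_ne_zero).hasFDerivAt).hasFDerivWithinAt
  · intro x hx
    change (‖fderiv ℝ G x‖₊ : ℝ) ≤ max C 0
    exact (hC x hx).trans (le_max_left _ _)

/-- Joint `C¹` regularity of `Fc` in `(s,r,h)` where `r > 0` and the square-root argument
is positive. -/
lemma contDiffAt_Fc {m : ℝ} (hm : 0 < m) (c : ℝ) {x : ℝ × ℝ × ℝ}
    (hr : 0 < x.2.1) (harg : 0 < 2*m*(1 - x.2.2^2) / phiR m x.2.1 + x.2.2^2/4) :
    ContDiffAt ℝ 1 (fun x : ℝ × ℝ × ℝ => Fc m c x.1 x.2.1 x.2.2) x := by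
  have hm' : (2:ℝ)*m ≠ 0 := by positivity
  have hfr : phiR m x.2.1 ≠ 0 := (phiR_pos hm hr).ne'
  have hs : ContDiffAt ℝ 1 (fun x : ℝ × ℝ × ℝ => x.1) x := contDiffAt_fst
  have hrr : ContDiffAt ℝ 1 (fun x : ℝ × ℝ × ℝ => x.2.1) x :=
    contDiffAt_fst.comp x contDiffAt_snd
  have hh : ContDiffAt ℝ 1 (fun x : ℝ × ℝ × ℝ => x.2.2) x :=
    contDiffAt_snd.comp x contDiffAt_snd
  have hphiR : ContDiffAt ℝ 1 (fun x : ℝ × ℝ × ℝ => phiR m x.2.1) x := by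
    unfold phiR
    exact (hrr.div_const _).mul ((hrr.div_const _).sub contDiffAt_const).exp
  have hh2 : ContDiffAt ℝ 1 (fun x : ℝ × ℝ × ℝ => x.2.2^2) x := hh.pow 2
  have hA : ContDiffAt ℝ 1
      (fun x : ℝ × ℝ × ℝ => 2*m*(1 - x.2.2^2) / phiR m x.2.1 + x.2.2^2/4) x :=
    ((contDiffAt_const.mul (contDiffAt_const.sub hh2)).div hphiR hfr).add (hh2.div_const _)
  have hsqrt : ContDiffAt ℝ 1
      (fun x : ℝ × ℝ × ℝ => Real.sqrt (2*m*(1 - x.2.2^2) / phiR m x.2.1 + x.2.2^2/4)) x :=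
    (Real.contDiffAt_sqrt harg.ne').comp x hA
  unfold Fc
  have hT1 : ContDiffAt ℝ 1 (fun x : ℝ × ℝ × ℝ =>
      ((1 - x.2.2^2) / phiR m x.2.1) * (1/(2*m) - 3/x.2.1) - x.2.2^2/(2*m*x.2.1)) x := by
    refine ContDiffAt.sub ?_ ?_
    · exact ((contDiffAt_const.sub hh2).div hphiR hfr).mul
        (contDiffAt_const.sub ((contDiffAt_const).div hrr hr.ne'))
    · exact hh2.div (contDiffAt_const.mul hrr) (by simp [hm.ne', hr.ne'];)
  refine ContDiffAt.sub (ContDiffAt.sub ?_ ?_) ?_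
  · exact (contDiffAt_const.mul hsqrt).mul hT1
  · exact (((contDiffAt_const.mul hs)).div (contDiffAt_const.mul hrr)
      (by simp [hm.ne', hr.ne'])).mul (hh.pow 3)
  · refine ContDiffAt.mul (ContDiffAt.mul ?_ ?_) (hh.mul (contDiffAt_const.sub hh2))
    · exact ((contDiffAt_const.mul hs)).div (contDiffAt_const.mul hphiR)
        (by simp [hfr])
    · exact contDiffAt_const.add (contDiffAt_const.div hrr hr.ne')

/-- Core uniqueness argument: a solution of the transformed equation starting at `0`
cannot reach `|h| = 1` at a nonnegative time if a global solution `q` with `|q| < 1`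
and the same initial value exists. -/
lemma no_cross (m c : ℝ) (hm : 0 < m) (Rc : ℝ → ℝ)
    (hRc : ∀ s, 0 < Rc s ∧ phi m (Rc s) = c^2/4 * (s^2 - 1))
    (J : Set ℝ) (hJconn : J.OrdConnected) (h0mem : (0:ℝ) ∈ J)
    (h : ℝ → ℝ) (hsol : ∀ s ∈ J, HasDerivWithinAt h (Fc m c s (Rc s) (h s)) J s)
    (hinit : h 0 = 0)
    (q : ℝ → ℝ) (hq : ∀ s, HasDerivAt q (Fc m c s (Rc s) (q s)) s)
    (hqlt : ∀ s, |q s| < 1) (hq0 : q 0 = 0)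
    (σ : ℝ) (hσJ : σ ∈ J) (hσpos : 0 ≤ σ) (hσ : |h σ| = 1) : False := by
  have hIccJ : Icc 0 σ ⊆ J := hJconn.out h0mem hσJ
  have hcontJ : ContinuousOn h J := fun s hs => (hsol s hs).continuousWithinAt
  have habs : ContinuousOn (fun s => |h s|) (Icc 0 σ) := (hcontJ.mono hIccJ).abs
  have hσ0 : 0 < σ := by
    rcases hσpos.lt_or_eq with h' | h'
    · exact h'
    · rw [← h', hinit] at hσ; simp at hσ
  set S : Set ℝ := Icc 0 σ ∩ (fun s => |h s|) ⁻¹' {1} with hSdef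
  have hSclosed : IsClosed S :=
    habs.preimage_isClosed_of_isClosed isClosed_Icc isClosed_singleton
  have hSne : S.Nonempty := ⟨σ, ⟨hσpos, le_refl σ⟩, hσ⟩
  have hSbdd : BddBelow S := ⟨0, fun x hx => hx.1.1⟩
  set T := sInf S with hTdef
  have hTS : T ∈ S := hSclosed.csInf_mem hSne hSbdd
  obtain ⟨⟨hT0, hTσ⟩, hT1⟩ := hTS
  have hT1 : |h T| = 1 := hT1
  have hTpos : 0 < T := by
    rcases hT0.lt_or_eq with h' | h'
    · exact h'
    · rw [← h', hinit] at hT1; simp at hT1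
  have hle1 : ∀ s ∈ Icc 0 T, |h s| ≤ 1 := by
    intro s hs
    by_contra hgt
    push_neg at hgt
    have hsIcc : Icc 0 s ⊆ Icc 0 σ := Icc_subset_Icc le_rfl (hs.2.trans hTσ)
    have h1mem : (1:ℝ) ∈ Icc (|h 0|) (|h s|) := by
      rw [hinit]
      exact ⟨by simp, hgt.le⟩
    obtain ⟨t, htmem, ht1⟩ := intermediate_value_Icc hs.1 (habs.mono hsIcc) h1mem
    have htS : t ∈ S := ⟨hsIcc htmem, ht1⟩
    have hTt : T ≤ t := csInf_le hSbdd htS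
    have hsT : s = T := le_antisymm hs.2 (hTt.trans htmem.2)
    rw [hsT, hT1] at hgt
    exact lt_irrefl _ hgt
  have hTmemJ : T ∈ J := hIccJ ⟨hT0, hTσ⟩
  -- bounds on the radius along [0, T]
  have hrlb : ∀ s ∈ Icc 0 T, Rc 0 ≤ Rc s := by
    intro s hs
    rw [← phi_le_iff hm (hRc 0).1 (hRc s).1, (hRc 0).2, (hRc s).2]
    nlinarith [sq_nonneg s, sq_nonneg c]
  have hrub : ∀ s ∈ Icc 0 T, Rc s ≤ Rc σ := by
    intro s hs
    rw [← phi_le_iff hm (hRc s).1 (hRc σ).1, (hRc s).2, (hRc σ).2]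
    have hsσ : s ≤ σ := hs.2.trans hTσ
    nlinarith [mul_nonneg (mul_nonneg (sq_nonneg c) (sub_nonneg.2 hsσ))
      (by linarith [hs.1] : (0:ℝ) ≤ σ + s)]
  -- the open set of regular points and the compact convex box
  set argf : ℝ × ℝ × ℝ → ℝ :=
    fun x => 2*m*(1 - x.2.2^2) / phiR m x.2.1 + x.2.2^2/4 with hargdef
  set V : Set (ℝ × ℝ × ℝ) := {x | 0 < x.2.1} with hVdef
  have hVopen : IsOpen V := isOpen_lt continuous_const (continuous_fst.comp continuous_snd)
  have hphiRcont : Continuous (fun x : ℝ × ℝ × ℝ => phiR m x.2.1) := by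
    unfold phiR; fun_prop
  have hargcont : ContinuousOn argf V := by
    apply ContinuousOn.add
    · apply ContinuousOn.div
      · fun_prop
      · exact hphiRcont.continuousOn
      · intro x hx
        exact (phiR_pos hm hx).ne'
    · fun_prop
  set U : Set (ℝ × ℝ × ℝ) := V ∩ argf ⁻¹' (Ioi 0) with hUdef
  have hUopen : IsOpen U := hargcont.isOpen_inter_preimage hVopen isOpen_Ioi
  set G : ℝ × ℝ × ℝ → ℝ := fun x => Fc m c x.1 x.2.1 x.2.2 with hGdef
  have hGcd : ∀ x ∈ U, ContDiffAt ℝ 1 G x := fun x hx =>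
    contDiffAt_Fc hm c hx.1 hx.2
  set B : Set (ℝ × ℝ × ℝ) := Icc 0 σ ×ˢ Icc (Rc 0) (Rc σ) ×ˢ Icc (-1 : ℝ) 1 with hBdef
  have hBcompact : IsCompact B := isCompact_Icc.prod (isCompact_Icc.prod isCompact_Icc)
  have hBconv : Convex ℝ B := (convex_Icc _ _).prod ((convex_Icc _ _).prod (convex_Icc _ _))
  have hBU : B ⊆ U := by
    rintro ⟨s, r, x⟩ ⟨hs, hr, hx⟩
    have hr0 : 0 < r := lt_of_lt_of_le (hRc 0).1 hr.1
    have hfr : 0 < phiR m r := phiR_pos hm hr0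
    refine ⟨hr0, ?_⟩
    have hx2 : x^2 ≤ 1 := by nlinarith [hx.1, hx.2]
    show (0:ℝ) < 2*m*(1 - x^2) / phiR m r + x^2/4
    rcases hx2.lt_or_eq with hlt | heq
    · have h1 : 0 < 2*m*(1 - x^2) / phiR m r := div_pos (by nlinarith) hfr
      positivity
    · rw [heq]
      norm_num
  obtain ⟨L, hL⟩ := exists_lipschitzOnWith_of_contDiffAt hUopen hGcd hBU hBcompact hBconv
  -- the clamped vector field
  set τ : ℝ → ℝ := fun t => max 0 (min t T) with hτdef
  have hτmem : ∀ t, τ t ∈ Icc 0 T := fun t =>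
    ⟨le_max_left _ _, max_le hT0 (min_le_right _ _)⟩
  set v : ℝ → ℝ → ℝ := fun t x => Fc m c (τ t) (Rc (τ t)) x with hvdef
  have hmemB : ∀ t, ∀ z ∈ Icc (-1:ℝ) 1, (τ t, Rc (τ t), z) ∈ B := by
    intro t z hz
    refine ⟨⟨(hτmem t).1, (hτmem t).2.trans hTσ⟩, ⟨hrlb _ (hτmem t), hrub _ (hτmem t)⟩, hz⟩
  have hv : ∀ t, LipschitzOnWith L (v t) (Icc (-1:ℝ) 1) := by
    intro t x hx y hy
    have := hL (hmemB t x hx) (hmemB t y hy)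
    calc edist (v t x) (v t y) ≤ L * edist (τ t, Rc (τ t), x) ((τ t, Rc (τ t), y) : ℝ × ℝ × ℝ) :=
          this
      _ = L * edist x y := by rw [Prod.edist_eq, Prod.edist_eq]; simp
  have hveq : ∀ t ∈ Ico 0 T, ∀ x, v t x = Fc m c t (Rc t) x := by
    intro t ht x
    have : τ t = t := by
      rw [hτdef]
      simp [min_eq_left ht.2.le, max_eq_right ht.1]
    show Fc m c (τ t) (Rc (τ t)) x = Fc m c t (Rc t) x
    rw [this]
  have hIccTJ : Icc 0 T ⊆ J := fun s hs => hIccJ ⟨hs.1, hs.2.trans hTσ⟩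
  have heq : EqOn h q (Icc 0 T) := by
    apply ODE_solution_unique_of_mem_Icc_right (v := v) (s := fun _ => Icc (-1:ℝ) 1) (fun t _ => hv t)
    · exact hcontJ.mono hIccTJ
    · intro t ht
      have htJ : t ∈ J := hIccTJ ⟨ht.1, ht.2.le⟩
      have hd := (hsol t htJ).mono (hJconn.out htJ hTmemJ)
      have hmem : Icc t T ∈ 𝓝[Ici t] t := by
        rw [← Ici_inter_Iic]
        exact inter_mem_nhdsWithin _ (Iic_mem_nhds ht.2)
      rw [hveq t ht]
      exact hd.mono_of_mem_nhdsWithin hmem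
    · intro t ht
      exact abs_le.mp (hle1 t ⟨ht.1, ht.2.le⟩)
    · exact fun t _ => (hq t).continuousAt.continuousWithinAt
    · intro t ht
      rw [hveq t ht]
      exact (hq t).hasDerivWithinAt
    · intro t _
      exact abs_le.mp (hqlt t).le
    · rw [hinit, hq0]
  have : h T = q T := heq ⟨hT0, le_refl T⟩
  rw [this] at hT1
  exact absurd hT1 (hqlt T).ne

/-- If a solution `h` of the transformed Jang equation on an interval `J ∋ 0`
with `h(0) = 0` satisfies `|h(s*)| = 1` for some `s* ∈ J`, then the solution of Jang's
equation on `L_c` with initial conditions `f(-c/2) = f'(-c/2) = 0` is not global. -/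
theorem transformed_blowup_implies_not_global (m c : ℝ) (hm : 0 < m)
    (hc : c ∈ Set.Ioo 0 (cCrit m))
    (R Rc : ℝ → ℝ)
    (hR : ∀ u, 0 < R u ∧ phi m (R u) = u * (u + c))
    (hRc : ∀ s, 0 < Rc s ∧ phi m (Rc s) = c^2/4 * (s^2 - 1))
    (J : Set ℝ) (hJconn : J.OrdConnected) (h0mem : (0:ℝ) ∈ J)
    (h : ℝ → ℝ)
    (hsol : ∀ s ∈ J, HasDerivWithinAt h (Fc m c s (Rc s) (h s)) J s)
    (hinit : h 0 = 0)
    (hstar : ∃ s' ∈ J, |h s'| = 1) :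
    ¬ ∃ (f f' : ℝ → ℝ),
        (∀ u, HasDerivAt f (f' u) u) ∧
        (∀ u, HasDerivAt f' (jangRHS m c u (R u) (f' u)) u) ∧
        f (-c/2) = 0 ∧ f' (-c/2) = 0 := by
  rintro ⟨f, f', hf, hf', hfinit, hf'init⟩
  obtain ⟨hc0, _⟩ := hc
  obtain ⟨σ, hσJ, hσ⟩ := hstar
  -- the transformed global solution
  set q : ℝ → ℝ := fun s => f' (c*(s-1)/2) / Real.sqrt (1 + f' (c*(s-1)/2)^2) with hqdef
  have hqlt : ∀ s, |q s| < 1 := fun s => abs_qfun_lt_one _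
  have hq0 : q 0 = 0 := by
    have : c*((0:ℝ)-1)/2 = -c/2 := by ring
    simp only [hqdef, this, hf'init]
    simp
  have hqderiv : ∀ s, HasDerivAt q (Fc m c s (Rc s) (q s)) s := by
    intro s
    set u := c*(s-1)/2 with hudef
    have hRu : R u = Rc s := by
      refine phi_inj hm (hR u).1 (hRc s).1 ?_
      rw [(hR u).2, (hRc s).2, hudef]
      ring
    have hγ : HasDerivAt (fun s : ℝ => c*(s-1)/2) (c/2) s := by
      simpa using (((hasDerivAt_id s).sub_const 1).const_mul c).div_const 2
    have h1 : HasDerivAt (fun s : ℝ => f' (c*(s-1)/2))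
        (jangRHS m c u (R u) (f' u) * (c/2)) s := (hf' u).comp s hγ
    have h2 := (hasDerivAt_qfun (f' u)).comp s h1
    have h3 : HasDerivAt q
        (1/((1 + f' u^2) * Real.sqrt (1 + f' u^2)) * (jangRHS m c u (R u) (f' u) * (c/2))) s := h2
    convert h3 using 1
    have hq_s : q s = f' u / Real.sqrt (1 + f' u ^2) := rfl
    rw [hq_s, Fc_of_jang hm (hRc s).1, ← hudef, hRu]
    have hp1 : (0:ℝ) < 1 + f' u^2 := by positivity
    have hQ : (0:ℝ) < Real.sqrt (1 + f' u^2) := Real.sqrt_pos.2 hp1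
    field_simp
  -- split on the sign of σ
  rcases le_or_gt 0 σ with hσpos | hσneg
  · exact no_cross m c hm Rc hRc J hJconn h0mem h hsol hinit q hqderiv hqlt hq0 σ hσJ hσpos hσ
  · -- reflect everything
    set J' : Set ℝ := Neg.neg ⁻¹' J with hJ'def
    have hJ'conn : J'.OrdConnected := by
      constructor
      intro x hx y hy z hz
      have : -z ∈ Icc (-y) (-x) := ⟨neg_le_neg hz.2, neg_le_neg hz.1⟩
      exact hJconn.out hy hx this
    set Rc' : ℝ → ℝ := fun s => Rc (-s) with hRc'def
    have hRc' : ∀ s, 0 < Rc' s ∧ phi m (Rc' s) = c^2/4 * (s^2 - 1) := by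
      intro s
      refine ⟨(hRc (-s)).1, ?_⟩
      rw [hRc'def]
      simpa using (hRc (-s)).2
    set h' : ℝ → ℝ := fun s => -h (-s) with hh'def
    have hsol' : ∀ s ∈ J', HasDerivWithinAt h' (Fc m c s (Rc' s) (h' s)) J' s := by
      intro s hs
      have hneg : HasDerivWithinAt (fun x : ℝ => -x) (-1) J' s :=
        (hasDerivAt_neg s).hasDerivWithinAt
      have hcomp := HasDerivWithinAt.scomp s (hsol (-s) hs) hneg (fun x hx => hx)
      have := hcomp.neg
      refine this.congr_deriv ?_
      have : h' s = -h (-s) := rfl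
      rw [this, ← Fc_neg m c s (Rc' s) (-(h (-s)))]
      simp [hRc'def]
    set q' : ℝ → ℝ := fun s => -q (-s) with hq'def
    have hq'deriv : ∀ s, HasDerivAt q' (Fc m c s (Rc' s) (q' s)) s := by
      intro s
      have := ((hqderiv (-s)).comp s (hasDerivAt_neg s)).neg
      refine this.congr_deriv ?_
      have : q' s = -q (-s) := rfl
      rw [this, ← Fc_neg m c s (Rc' s) (-(q (-s)))]
      simp [hRc'def]
    refine no_cross m c hm Rc' hRc' J' hJ'conn (by simpa [hJ'def] using h0mem) h' hsol'
      (by simp [hh'def, hinit]) q' hq'deriv (fun s => by simpa [hq'def] using hqlt (-s))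
      (by simp [hq'def, hq0]) (-σ) (by simpa [hJ'def] using hσJ) (by linarith) ?_
    simpa [hh'def] using hσ
end

section
/- Let c ∈ (0, c_crit) and set δ := √(e·m·(c_crit² - c²)). Then r_c(s) ≤ 2√2·m·|s| + δ for all s ∈ ℝ. -/
lemma aux_d (d : ℝ) (hd : 0 ≤ d) : d^2/2 - 1 ≤ Real.exp d * (d - 1) := by
  set f : ℝ → ℝ := fun x => Real.exp x * (x - 1) - x^2/2 + 1 with hf
  have hderiv : ∀ x : ℝ, HasDerivAt f (x * (Real.exp x - 1)) x := by
    intro x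
    have h1 : HasDerivAt (fun x : ℝ => Real.exp x * (x - 1))
        (Real.exp x * (x - 1) + Real.exp x * 1) x :=
      (Real.hasDerivAt_exp x).mul ((hasDerivAt_id x).sub_const 1)
    have h2 : HasDerivAt (fun x : ℝ => x^2/2) ((2 : ℕ) * x ^ 1 / 2) x :=
      (hasDerivAt_pow 2 x).div_const 2
    have := (h1.sub h2).add_const 1
    refine this.congr_deriv ?_
    push_cast
    ring
  have hmono : MonotoneOn f (Set.Ici 0) := by
    apply monotoneOn_of_deriv_nonneg (convex_Ici 0)
    · exact (Continuous.continuousOn (by continuity))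
    · exact fun x _ => (hderiv x).differentiableAt.differentiableWithinAt
    · intro x hx
      rw [(hderiv x).deriv]
      have hx' : 0 < x := by simpa using hx
      have : (1:ℝ) ≤ Real.exp x := Real.one_le_exp hx'.le
      nlinarith
  have h0 : f 0 = 0 := by simp [hf]
  have := hmono (Set.self_mem_Ici) (by exact hd) hd
  rw [h0] at this
  simp only [hf] at this
  linarith

lemma aux_t (d t : ℝ) (hd : 0 ≤ d) (hd2 : d^2 ≤ 2) (ht : 0 ≤ t) :
    (1 - d^2/2) * (t^2 - 1) ≤
      Real.exp (Real.sqrt 2 * t + d) * (Real.sqrt 2 * t + d - 1) := by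
  have ha : (0:ℝ) ≤ Real.sqrt 2 := Real.sqrt_nonneg 2
  have ha2 : Real.sqrt 2 * Real.sqrt 2 = 2 := Real.mul_self_sqrt (by norm_num)
  set g : ℝ → ℝ := fun x =>
    Real.exp (Real.sqrt 2 * x + d) * (Real.sqrt 2 * x + d - 1)
      - (1 - d^2/2) * (x^2 - 1) with hg
  have hderiv : ∀ x : ℝ, HasDerivAt g
      (Real.sqrt 2 * (Real.sqrt 2 * x + d) * Real.exp (Real.sqrt 2 * x + d)
        - (1 - d^2/2) * (2 * x)) x := by
    intro x
    have hl : HasDerivAt (fun x : ℝ => Real.sqrt 2 * x + d) (Real.sqrt 2) x := by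
      simpa using ((hasDerivAt_id x).const_mul (Real.sqrt 2)).add_const d
    have he : HasDerivAt (fun x : ℝ => Real.exp (Real.sqrt 2 * x + d))
        (Real.exp (Real.sqrt 2 * x + d) * Real.sqrt 2) x :=
      (Real.hasDerivAt_exp _).comp x hl
    have hls : HasDerivAt (fun x : ℝ => Real.sqrt 2 * x + d - 1) (Real.sqrt 2) x :=
      hl.sub_const 1
    have h1 := he.mul hls
    have h2 : HasDerivAt (fun x : ℝ => (1 - d^2/2) * (x^2 - 1))
        ((1 - d^2/2) * (2 * x)) x := by
      have := ((hasDerivAt_pow 2 x).sub_const 1).const_mul (1 - d^2/2)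
      refine this.congr_deriv ?_
      push_cast
      ring
    have := h1.sub h2
    refine this.congr_deriv ?_
    ring
  have hmono : MonotoneOn g (Set.Ici 0) := by
    apply monotoneOn_of_deriv_nonneg (convex_Ici 0)
    · exact (Continuous.continuousOn (by continuity))
    · exact fun x _ => (hderiv x).differentiableAt.differentiableWithinAt
    · intro x hx
      rw [(hderiv x).deriv]
      have hx' : 0 < x := by simpa using hx
      have hw : 0 ≤ Real.sqrt 2 * x + d := by positivity
      have hexp : (1:ℝ) ≤ Real.exp (Real.sqrt 2 * x + d) := Real.one_le_exp hw
      have h1 : 0 ≤ Real.sqrt 2 * d := mul_nonneg ha hd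
      have h2 : Real.sqrt 2 * (Real.sqrt 2 * x + d) = 2 * x + Real.sqrt 2 * d := by
        linear_combination x * ha2
      have key : 2 * x ≤ Real.sqrt 2 * (Real.sqrt 2 * x + d) *
          Real.exp (Real.sqrt 2 * x + d) := by
        rw [h2]
        nlinarith [mul_le_mul_of_nonneg_left hexp
          (show (0:ℝ) ≤ 2 * x + Real.sqrt 2 * d by linarith)]
      nlinarith [key, mul_nonneg (sq_nonneg d) hx'.le]
  have h0 : 0 ≤ g 0 := by
    have h := aux_d d hd
    have e0 : Real.sqrt 2 * 0 + d = d := by ring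
    simp only [hg, e0]
    nlinarith
  have := hmono Set.self_mem_Ici (show t ∈ Set.Ici (0:ℝ) from ht) ht
  have hgt : 0 ≤ g t := le_trans h0 this
  simp only [hg] at hgt
  linarith

lemma phi_strictMono (m : ℝ) (hm : 0 < m) : StrictMonoOn (phi m) (Set.Ici 0) := by
  have hm2 : (2*m) ≠ 0 := by positivity
  have hderiv : ∀ r : ℝ, HasDerivAt (phi m)
      (Real.exp (r / (2*m) - 1) * (r / (2*m))) r := by
    intro r
    have hl : HasDerivAt (fun r : ℝ => r / (2*m) - 1) (1/(2*m)) r := by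
      simpa using ((hasDerivAt_id r).div_const (2*m)).sub_const 1
    have he : HasDerivAt (fun r : ℝ => Real.exp (r / (2*m) - 1))
        (Real.exp (r / (2*m) - 1) * (1/(2*m))) r :=
      (Real.hasDerivAt_exp _).comp r hl
    have h1 := he.mul ((hasDerivAt_id r).sub_const (2*m))
    unfold phi
    refine h1.congr_deriv ?_
    simp only [id]
    field_simp
    ring
  apply strictMonoOn_of_deriv_pos (convex_Ici 0)
  · exact Continuous.continuousOn (by unfold phi; continuity)
  · intro r hr
    rw [interior_Ici] at hr
    rw [(hderiv r).deriv]
    have hr' : 0 < r := hr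
    positivity

/-- For `c ∈ (0, c_crit)` and `δ = √(em(c_crit² - c²))`, the radial function
satisfies `r_c(s) ≤ 2√2·m·|s| + δ` for all `s`. -/
theorem rc_upper_bound (m c : ℝ) (hm : 0 < m) (hc : c ∈ Set.Ioo 0 (cCrit m))
    (Rc : ℝ → ℝ)
    (hRc : ∀ s, 0 < Rc s ∧ phi m (Rc s) = c^2/4 * (s^2 - 1)) (s : ℝ) :
    Rc s ≤ 2 * Real.sqrt 2 * m * |s| +
      Real.sqrt (Real.exp 1 * m * ((cCrit m)^2 - c^2)) := by
  obtain ⟨hcpos, hclt⟩ := hc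
  obtain ⟨hrpos, hreq⟩ := hRc s
  have he1 : (0:ℝ) < Real.exp 1 := Real.exp_pos 1
  have hcc : (cCrit m)^2 = 8*m / Real.exp 1 := by
    rw [cCrit, Real.sq_sqrt (by positivity)]
  have hc2lt : c^2 < (cCrit m)^2 := by
    have := pow_lt_pow_left₀ hclt hcpos.le (n := 2) (by norm_num)
    exact this
  set t : ℝ := |s| with ht_def
  have ht : 0 ≤ t := abs_nonneg s
  set δ : ℝ := Real.sqrt (Real.exp 1 * m * ((cCrit m)^2 - c^2)) with hδ_def
  have hδnn : 0 ≤ δ := Real.sqrt_nonneg _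
  have hδ2 : δ^2 = 8*m^2 - Real.exp 1 * m * c^2 := by
    rw [hδ_def, Real.sq_sqrt (mul_pos (mul_pos he1 hm) (sub_pos.mpr hc2lt)).le, hcc]
    field_simp
  set d : ℝ := δ / (2*m) with hd_def
  have hdnn : 0 ≤ d := by positivity
  have hd2v : d^2 = 2 - Real.exp 1 * c^2 / (4*m) := by
    rw [hd_def, div_pow, hδ2]
    field_simp
    ring
  have hd2 : d^2 ≤ 2 := by
    rw [hd2v]
    have : 0 ≤ Real.exp 1 * c^2 / (4*m) := by positivity
    linarith
  set R : ℝ := 2 * Real.sqrt 2 * m * t + δ with hR_def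
  have hRnn : (0:ℝ) ≤ R := by
    have : (0:ℝ) ≤ 2 * Real.sqrt 2 * m * t := by positivity
    linarith
  have hphiR : phi m R = (2*m/Real.exp 1) *
      (Real.exp (Real.sqrt 2 * t + d) * (Real.sqrt 2 * t + d - 1)) := by
    have h1 : R / (2*m) - 1 = Real.sqrt 2 * t + d - 1 := by
      rw [hR_def, hd_def]
      field_simp
    have h2 : R - 2*m = 2*m * (Real.sqrt 2 * t + d - 1) := by
      rw [hR_def, hd_def]
      field_simp
    unfold phi
    rw [h1, h2, show Real.sqrt 2 * t + d - 1 = (Real.sqrt 2 * t + d) - 1 by ring,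
      Real.exp_sub]
    ring
  have hcoef : c^2/4 = (2*m/Real.exp 1) * (1 - d^2/2) := by
    rw [hd2v]
    field_simp
    ring
  have hs2 : s^2 = t^2 := (sq_abs s).symm
  have hle : phi m (Rc s) ≤ phi m R := by
    rw [hreq, hphiR, hs2, hcoef, mul_assoc]
    apply mul_le_mul_of_nonneg_left (aux_t d t hdnn hd2 ht) (by positivity)
  have := ((phi_strictMono m hm).le_iff_le
    (show Rc s ∈ Set.Ici (0:ℝ) from hrpos.le)
    (show R ∈ Set.Ici (0:ℝ) from hRnn)).mp hle
  exact this
end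

section
/- For every c ∈ (0, c_crit): r_c(s) ≤ 2m for all s ∈ [-1, 1], with r_c(s) = 2m if and only if s = ±1; moreover the minimal value r_c(0) satisfies r_c(0) ≤ √(e·m·(c_crit² - c²)), so r_c(0) → 0 as c → c_crit. -/
/-- Key elementary inequality: `e^x (1-x) ≤ 1 - x²/2` on `[0,1]`. -/
lemma key_ineq (x : ℝ) (h0 : 0 ≤ x) (h1 : x ≤ 1) :
    Real.exp x * (1 - x) ≤ 1 - x^2/2 := by
  have hb := Real.exp_bound' h0 h1 (n := 3) (by norm_num)
  simp only [Finset.sum_range_succ, Finset.sum_range_zero, Nat.factorial] at hb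
  norm_num at hb
  nlinarith [hb, pow_nonneg h0 3, pow_nonneg h0 4, sq_nonneg x]

/-- Scaled version: for `0 ≤ r ≤ 2m`, `4m·e^{r/(2m)}·(2m-r) ≤ 8m² - r²`. -/
lemma key2 (m r : ℝ) (hm : 0 < m) (hr0 : 0 ≤ r) (hr1 : r ≤ 2*m) :
    4*m * (Real.exp (r/(2*m)) * (2*m - r)) ≤ 8*m^2 - r^2 := by
  set x := r/(2*m) with hxdef
  have hx0 : 0 ≤ x := by positivity
  have hx1 : x ≤ 1 := by rw [hxdef, div_le_one (by linarith)]; linarith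
  have hk := key_ineq x hx0 hx1
  have hr : r = 2*m*x := by rw [hxdef]; field_simp
  have h8 := mul_le_mul_of_nonneg_left hk (show (0:ℝ) ≤ 8*m^2 by positivity)
  rw [hr]
  nlinarith [h8]

/-- For every `c ∈ (0, c_crit)`: `r_c(s) ≤ 2m` on `[-1,1]` with equality iff
`s = ±1`; moreover `r_c(0) ≤ √(em(c_crit² - c²))`, hence `r_c(0) → 0` as `c → c_crit`. -/
theorem rc_inside_horizon (m : ℝ) (hm : 0 < m) (Rc : ℝ → ℝ → ℝ)
    (hRc : ∀ c ∈ Set.Ioo 0 (cCrit m), ∀ s, 0 < Rc c s ∧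
      phi m (Rc c s) = c^2/4 * (s^2 - 1)) :
    (∀ c ∈ Set.Ioo 0 (cCrit m),
      (∀ s ∈ Set.Icc (-1:ℝ) 1, Rc c s ≤ 2*m ∧ (Rc c s = 2*m ↔ s = 1 ∨ s = -1)) ∧
      Rc c 0 ≤ Real.sqrt (Real.exp 1 * m * ((cCrit m)^2 - c^2))) ∧
    Filter.Tendsto (fun c => Rc c 0)
      (nhdsWithin (cCrit m) (Set.Ioo 0 (cCrit m))) (nhds 0) := by
  have he : (0:ℝ) < Real.exp 1 := Real.exp_pos 1
  have hcc2 : (cCrit m)^2 = 8*m / Real.exp 1 := Real.sq_sqrt (by positivity)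
  have main : ∀ c ∈ Set.Ioo 0 (cCrit m),
      (∀ s ∈ Set.Icc (-1:ℝ) 1, Rc c s ≤ 2*m ∧ (Rc c s = 2*m ↔ s = 1 ∨ s = -1)) ∧
      Rc c 0 ≤ Real.sqrt (Real.exp 1 * m * ((cCrit m)^2 - c^2)) := by
    intro c hc
    obtain ⟨hc0, hc1⟩ := hc
    have hle2m : ∀ s : ℝ, s^2 ≤ 1 → Rc c s ≤ 2*m := by
      intro s hs2
      obtain ⟨hr0, hφ⟩ := hRc c ⟨hc0, hc1⟩ s
      unfold phi at hφ
      by_contra hgt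
      push_neg at hgt
      have hexp : 0 < Real.exp (Rc c s / (2*m) - 1) := Real.exp_pos _
      nlinarith [mul_pos hexp (show 0 < Rc c s - 2*m by linarith),
        mul_nonneg (sq_nonneg c) (show 0 ≤ 1 - s^2 by linarith)]
    constructor
    · intro s hs
      obtain ⟨hr0, hφ⟩ := hRc c ⟨hc0, hc1⟩ s
      unfold phi at hφ
      have hexp : 0 < Real.exp (Rc c s / (2*m) - 1) := Real.exp_pos _
      have hs2 : s^2 ≤ 1 := by nlinarith [hs.1, hs.2]
      refine ⟨hle2m s hs2, ?_, ?_⟩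
      · intro h
        rw [h] at hφ
        have h0 : c^2/4 * (s^2-1) = 0 := by linarith [hφ]
        have hs1 : (s-1)*(s+1) = 0 := by
          have hc2 : 0 < c^2 := by positivity
          nlinarith [h0]
        rcases mul_eq_zero.1 hs1 with h | h
        · exact Or.inl (by linarith)
        · exact Or.inr (by linarith)
      · intro h
        have hs1 : s^2 - 1 = 0 := by rcases h with h | h <;> rw [h] <;> ring
        rw [hs1] at hφ
        have : Rc c s - 2*m = 0 := by
          rcases mul_eq_zero.1 (by linarith [hφ] :
            Real.exp (Rc c s / (2*m) - 1) * (Rc c s - 2*m) = 0) with h' | h'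
          · exact absurd h' hexp.ne'
          · exact h'
        linarith
    · -- bound at s = 0
      obtain ⟨hr0, hφ⟩ := hRc c ⟨hc0, hc1⟩ 0
      unfold phi at hφ
      set r := Rc c 0 with hrdef
      have hr2m : r ≤ 2*m := hle2m 0 (by norm_num)
      have hEE : Real.exp 1 * Real.exp (r/(2*m) - 1) = Real.exp (r/(2*m)) := by
        rw [← Real.exp_add]; ring_nf
      have hφ' : Real.exp (r/(2*m)) * (2*m - r) = Real.exp 1 * c^2/4 := by
        rw [← hEE]; nlinarith [hφ, Real.exp_pos (r/(2*m) - 1)]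
      have hk := key2 m r hm hr0.le hr2m
      have hsq : r^2 ≤ Real.exp 1 * m * ((cCrit m)^2 - c^2) := by
        rw [hcc2]
        have h2 : Real.exp 1 * m * (8*m/Real.exp 1 - c^2)
            = 8*m^2 - Real.exp 1 * m * c^2 := by field_simp
        rw [h2]
        nlinarith [hk, hφ']
      exact Real.le_sqrt_of_sq_le hsq
  refine ⟨main, ?_⟩
  have hg : Filter.Tendsto (fun c => Real.sqrt (Real.exp 1 * m * ((cCrit m)^2 - c^2)))
      (nhdsWithin (cCrit m) (Set.Ioo 0 (cCrit m))) (nhds 0) := by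
    have hcont : Continuous fun c : ℝ => Real.sqrt (Real.exp 1 * m * ((cCrit m)^2 - c^2)) := by
      exact Real.continuous_sqrt.comp (by continuity)
    have ht := hcont.tendsto (cCrit m)
    have h0 : Real.sqrt (Real.exp 1 * m * ((cCrit m)^2 - (cCrit m)^2)) = 0 := by
      simp
    rw [h0] at ht
    exact ht.mono_left nhdsWithin_le_nhds
  refine tendsto_of_tendsto_of_tendsto_of_le_of_le' tendsto_const_nhds hg ?_ ?_
  · filter_upwards [self_mem_nhdsWithin] with c hc
    exact (hRc c hc 0).1.le
  · filter_upwards [self_mem_nhdsWithin] with c hc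
    exact (main c hc).2
end

section
/- Let c ∈ (0, c_crit) and let h : [0, 1] → (-1, 1) be a solution of the transformed Jang equation dh/ds = F_c(s, h(s)) with h(0) = 0. Then h(s) ≤ 0 for all s ∈ [0, 1]. -/
/-- A solution `h : [0,1] → (-1,1)` of the transformed Jang equation with
`h(0) = 0` satisfies `h(s) ≤ 0` on `[0,1]`. -/
theorem h_nonpositive (m c : ℝ) (hm : 0 < m) (hc : c ∈ Set.Ioo 0 (cCrit m))
    (Rc : ℝ → ℝ)
    (hRc : ∀ s, 0 < Rc s ∧ phi m (Rc s) = c^2/4 * (s^2 - 1))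
    (h : ℝ → ℝ)
    (hrange : ∀ s ∈ Set.Icc (0:ℝ) 1, h s ∈ Set.Ioo (-1:ℝ) 1)
    (hsol : ∀ s ∈ Set.Icc (0:ℝ) 1,
      HasDerivWithinAt h (Fc m c s (Rc s) (h s)) (Set.Icc (0:ℝ) 1) s)
    (hinit : h 0 = 0) :
    ∀ s ∈ Set.Icc (0:ℝ) 1, h s ≤ 0 := by
  by_contra hcon
  push_neg at hcon
  obtain ⟨s₀, hs₀mem, hs₀⟩ := hcon
  have hcont : ContinuousOn h (Set.Icc 0 1) := fun s hs => (hsol s hs).continuousWithinAt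
  set S : Set ℝ := Set.Icc 0 s₀ ∩ h ⁻¹' Set.Iic 0 with hSdef
  have h0S : (0:ℝ) ∈ S := ⟨⟨le_refl 0, hs₀mem.1⟩, by simp [hinit]⟩
  have hSne : S.Nonempty := ⟨0, h0S⟩
  have hbdd : BddAbove S := ⟨s₀, fun x hx => hx.1.2⟩
  have hsub : Set.Icc 0 s₀ ⊆ Set.Icc (0:ℝ) 1 := Set.Icc_subset_Icc le_rfl hs₀mem.2
  have hclosed : IsClosed S :=
    (hcont.mono hsub).preimage_isClosed_of_isClosed isClosed_Icc isClosed_Iic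
  set T : ℝ := sSup S with hTdef
  have hTS : T ∈ S := hclosed.csSup_mem hSne hbdd
  have hT0 : 0 ≤ T := hTS.1.1
  have hTs₀ : T ≤ s₀ := hTS.1.2
  have hTle : h T ≤ 0 := hTS.2
  have hTlt : T < s₀ := lt_of_le_of_ne hTs₀ (fun he => by rw [he] at hTle; linarith)
  have hT01 : T ∈ Set.Icc (0:ℝ) 1 := ⟨hT0, le_trans hTs₀ hs₀mem.2⟩
  have hIocsub : Set.Ioc T s₀ ⊆ Set.Icc (0:ℝ) 1 :=
    fun x hx => ⟨le_trans hT0 hx.1.le, le_trans hx.2 hs₀mem.2⟩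
  have hpos : ∀ s ∈ Set.Ioc T s₀, 0 < h s := by
    intro s hs
    by_contra hle
    push_neg at hle
    have : s ∈ S := ⟨⟨le_trans hT0 hs.1.le, hs.2⟩, hle⟩
    have := le_csSup hbdd this
    exact absurd this (not_le.mpr (by rw [← hTdef]; exact hs.1))
  haveI hnb : (nhdsWithin T (Set.Ioc T s₀)).NeBot := by
    refine mem_closure_iff_nhdsWithin_neBot.mp ?_
    rw [closure_Ioc (ne_of_lt hTlt)]
    exact ⟨le_rfl, hTlt.le⟩
  have hT0eq : h T = 0 := by
    have htend : Filter.Tendsto h (nhdsWithin T (Set.Ioc T s₀)) (nhds (h T)) :=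
      (hcont T hT01).mono (hIocsub)
    have hge : (0:ℝ) ≤ h T :=
      ge_of_tendsto htend (eventually_mem_nhdsWithin.mono fun s hs => (hpos s hs).le)
    linarith
  -- the derivative at T is nonnegative
  have hd : HasDerivWithinAt h (Fc m c T (Rc T) (h T)) (Set.Ioc T s₀) T :=
    (hsol T hT01).mono hIocsub
  have hdiff : Set.Ioc T s₀ \ {T} = Set.Ioc T s₀ := by
    apply Set.diff_singleton_eq_self
    simp
  rw [hasDerivWithinAt_iff_tendsto_slope, hdiff] at hd
  have hdge : 0 ≤ Fc m c T (Rc T) (h T) := by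
    refine ge_of_tendsto hd (eventually_mem_nhdsWithin.mono fun s hs => ?_)
    rw [slope_def_field, hT0eq]
    exact div_nonneg (by linarith [hpos s hs]) (by linarith [hs.1])
  -- the derivative at T is negative
  obtain ⟨hr, hphi⟩ := hRc T
  set r : ℝ := Rc T with hrdef
  have hphiR : 0 < phiR m r := mul_pos (div_pos hr (by linarith)) (Real.exp_pos _)
  have hrle : r ≤ 2*m := by
    have hT1 : T ≤ 1 := hT01.2
    have hphile : phi m r ≤ 0 := by
      rw [hphi]
      have : T^2 ≤ 1 := by nlinarith
      have hc2 : 0 ≤ c^2/4 := by positivity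
      nlinarith
    unfold phi at hphile
    by_contra hgt
    push_neg at hgt
    have := mul_pos (Real.exp_pos (r / (2*m) - 1)) (sub_pos.mpr hgt)
    linarith
  have hrle' : r ≤ 2*m := hrle
  have hneg : Fc m c T r 0 < 0 := by
    have heq : Fc m c T r 0 =
        (c^2/2) * Real.sqrt (2*m / phiR m r) * ((1 / phiR m r) * (1/(2*m) - 3/r)) := by
      unfold Fc
      norm_num
    rw [heq]
    have hfac : 1/(2*m) - 3/r < 0 := by
      have : 1/(2*m) < 3/r := by
        rw [div_lt_div_iff₀ (by linarith) hr]
        nlinarith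
      linarith
    have hsq : 0 < Real.sqrt (2*m / phiR m r) :=
      Real.sqrt_pos.mpr (div_pos (by linarith) hphiR)
    have hcpos : 0 < c := hc.1
    have h1 : 0 < c^2/2 := by positivity
    exact mul_neg_of_pos_of_neg (mul_pos h1 hsq)
      (mul_neg_of_pos_of_neg (by positivity) hfac)
  rw [hT0eq] at hdge
  exact absurd hdge (not_le.mpr hneg)
end

section
/- Let A, B, δ, C, s₁ be positive real numbers, and suppose (1-h²)² - h³ ≥ C for all h ∈ [-1, 0]. Let g : [0, s₁] → [-1, 0] be differentiable with g(0) = 0 and g'(s) ≤ -B·((1-g(s)²)² - g(s)³)/(A·s + δ) for all s ∈ [0, s₁]. Then g(s) ≤ (B·C/A)·log(δ/(A·s + δ)) for all s ∈ [0, s₁]. -/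
/-- The separable ODE comparison estimate: if `g : [0,s₁] → [-1,0]` has
`g(0) = 0` and `g'(s) ≤ -B((1-g²)² - g³)/(As + δ)`, with `(1-h²)² - h³ ≥ C > 0` on
`[-1,0]`, then `g(s) ≤ (BC/A)·log(δ/(As + δ))` on `[0,s₁]`. -/
theorem separable_comparison (A B δ C s₁ : ℝ)
    (hA : 0 < A) (hB : 0 < B) (hδ : 0 < δ) (hC : 0 < C) (hs₁ : 0 < s₁)
    (hCbound : ∀ x ∈ Set.Icc (-1:ℝ) 0, C ≤ (1 - x^2)^2 - x^3)
    (g g' : ℝ → ℝ)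
    (hrange : ∀ s ∈ Set.Icc (0:ℝ) s₁, g s ∈ Set.Icc (-1:ℝ) 0)
    (hderiv : ∀ s ∈ Set.Icc (0:ℝ) s₁,
      HasDerivWithinAt g (g' s) (Set.Icc (0:ℝ) s₁) s)
    (hineq : ∀ s ∈ Set.Icc (0:ℝ) s₁,
      g' s ≤ -B * ((1 - (g s)^2)^2 - (g s)^3) / (A*s + δ))
    (hinit : g 0 = 0) :
    ∀ s ∈ Set.Icc (0:ℝ) s₁, g s ≤ (B*C/A) * Real.log (δ / (A*s + δ)) := by
  have hpos : ∀ s ∈ Set.Icc (0:ℝ) s₁, 0 < A*s + δ := by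
    intro s hs
    have := hs.1
    nlinarith
  set φ : ℝ → ℝ := fun s => (B*C/A) * (Real.log δ - Real.log (A*s + δ)) with hφ
  -- derivative of φ
  have hφderiv : ∀ s ∈ Set.Icc (0:ℝ) s₁,
      HasDerivAt φ (-(B*C) / (A*s + δ)) s := by
    intro s hs
    have h1 : HasDerivAt (fun s => A*s + δ) A s := by
      simpa using ((hasDerivAt_id s).const_mul A).add_const δ
    have h2 : HasDerivAt (fun s => Real.log (A*s + δ)) (A / (A*s + δ)) s :=
      h1.log (hpos s hs).ne'
    have h3 : HasDerivAt (fun s => Real.log δ - Real.log (A*s + δ))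
        (0 - A / (A*s + δ)) s := (hasDerivAt_const s _).sub h2
    have h4 := h3.const_mul (B*C/A)
    refine h4.congr_deriv ?_
    have hp := (hpos s hs).ne'
    field_simp [hA.ne']
    ring
  -- F = g - φ is antitone on [0, s₁]
  have hFanti : AntitoneOn (fun s => g s - φ s) (Set.Icc 0 s₁) := by
    apply antitoneOn_of_hasDerivWithinAt_nonpos (convex_Icc 0 s₁)
      (f' := fun s => g' s - (-(B*C) / (A*s + δ)))
    · intro s hs
      exact ((hderiv s hs).sub ((hφderiv s hs).hasDerivWithinAt)).continuousWithinAt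
    · intro s hs
      rw [interior_Icc] at hs
      have hs' : s ∈ Set.Icc (0:ℝ) s₁ := Set.Ioo_subset_Icc_self hs
      exact ((hderiv s hs').sub ((hφderiv s hs').hasDerivWithinAt)).mono interior_subset
    · intro s hs
      rw [interior_Icc] at hs
      have hs' : s ∈ Set.Icc (0:ℝ) s₁ := Set.Ioo_subset_Icc_self hs
      have hE : C ≤ (1 - (g s)^2)^2 - (g s)^3 := hCbound _ (hrange s hs')
      have hp := hpos s hs'
      have h1 : g' s ≤ -B * ((1 - (g s)^2)^2 - (g s)^3) / (A*s + δ) := hineq s hs'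
      have h2 : -B * ((1 - (g s)^2)^2 - (g s)^3) / (A*s + δ) ≤ -(B*C) / (A*s + δ) := by
        apply (div_le_div_iff_of_pos_right hp).mpr
        nlinarith
      linarith
  intro s hs
  have h0 : (0:ℝ) ∈ Set.Icc (0:ℝ) s₁ := ⟨le_refl 0, hs₁.le⟩
  have := hFanti h0 hs hs.1
  have hφ0 : φ 0 = 0 := by simp [hφ]
  have hlog : Real.log (δ / (A*s + δ)) = Real.log δ - Real.log (A*s + δ) :=
    Real.log_div hδ.ne' (hpos s hs).ne'
  rw [hlog, show B*C/A * (Real.log δ - Real.log (A*s + δ)) = φ s from rfl]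
  simp only [hinit, hφ0, sub_zero] at this
  linarith [this]
end

section
/- Let c ∈ (0, c_crit), let s₀ ∈ (0, 1), and suppose h : [0, s₀] → [-1, 1] solves the transformed Jang equation dh/ds = F_c(s, h(s)) with h(0) = 0, |h(s)| < 1 for s ∈ [0, s₀), and h(s₀) = -1. Set u₀ := c(s₀ - 1)/2, and let f : [-c/2, u₀) → ℝ be the corresponding solution of Jang's equation on L_c with f(-c/2) = f'(-c/2) = 0, so that f'(u) = h(γ(u))/√(1 - h(γ(u))²) with γ(u) = (2/c)u + 1. Then the limit lim_{u → u₀⁻} f(u) exists and is finite; that is, the blowup solution f remains bounded while its derivative f' diverges at u₀. -/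
set_option maxHeartbeats 1000000 in
/-- The blowup solution `f` remains bounded: the limit of `f(u)` as
`u → u₀⁻` (within the domain `[-c/2, u₀)`) exists and is finite. -/
theorem blowup_solution_bounded (m c : ℝ) (hm : 0 < m) (hc : c ∈ Set.Ioo 0 (cCrit m))
    (Rc : ℝ → ℝ)
    (hRc : ∀ s, 0 < Rc s ∧ phi m (Rc s) = c^2/4 * (s^2 - 1))
    (s₀ : ℝ) (hs₀ : s₀ ∈ Set.Ioo (0:ℝ) 1)
    (h : ℝ → ℝ)
    (hrange : ∀ s ∈ Set.Icc (0:ℝ) s₀, h s ∈ Set.Icc (-1:ℝ) 1)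
    (hsol : ∀ s ∈ Set.Icc (0:ℝ) s₀,
      HasDerivWithinAt h (Fc m c s (Rc s) (h s)) (Set.Icc (0:ℝ) s₀) s)
    (hinit : h 0 = 0)
    (hlt : ∀ s ∈ Set.Ico (0:ℝ) s₀, |h s| < 1)
    (hend : h s₀ = -1)
    (f f' : ℝ → ℝ)
    (hf'def : ∀ u, f' u = h ((2/c)*u + 1) / Real.sqrt (1 - (h ((2/c)*u + 1))^2))
    (hf : ∀ u ∈ Set.Ico (-c/2) (c*(s₀-1)/2),
      HasDerivWithinAt f (f' u) (Set.Ico (-c/2) (c*(s₀-1)/2)) u)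
    (hf0 : f (-c/2) = 0) :
    ∃ L : ℝ, Filter.Tendsto f
      (nhdsWithin (c*(s₀-1)/2) (Set.Ico (-c/2) (c*(s₀-1)/2))) (nhds L) := by
  obtain ⟨hc0, -⟩ := hc
  obtain ⟨hs0pos, hs0lt1⟩ := hs₀
  obtain ⟨u₀, hu₀def⟩ : ∃ u₀ : ℝ, u₀ = c*(s₀-1)/2 := ⟨_, rfl⟩
  rw [← hu₀def] at hf ⊢
  have hr : 0 < Rc s₀ := (hRc s₀).1
  -- the value of the derivative at s₀
  have hF₀ : Fc m c s₀ (Rc s₀) (h s₀) = c^2*(s₀-1)/(8*m*Rc s₀) := by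
    rw [hend]; unfold Fc
    norm_num
    field_simp
    ring
  obtain ⟨K, hKdef⟩ : ∃ K : ℝ, K = -(c^2*(s₀-1)/(8*m*Rc s₀))/2 := ⟨_, rfl⟩
  have hK : 0 < K := by
    have hc2 : 0 < c^2 := pow_pos hc0 2
    have hneg : c^2*(s₀-1)/(8*m*Rc s₀) < 0 := by
      apply div_neg_of_neg_of_pos
      · nlinarith
      · positivity
    rw [hKdef]; linarith
  -- derivative at s₀ and slope estimate
  have hmem₀ : s₀ ∈ Set.Icc (0:ℝ) s₀ := ⟨hs0pos.le, le_refl s₀⟩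
  have hders₀ := hsol s₀ hmem₀
  have hslope : Filter.Tendsto (slope h s₀) (nhdsWithin s₀ (Set.Icc (0:ℝ) s₀ \ {s₀}))
      (nhds (c^2*(s₀-1)/(8*m*Rc s₀))) := by
    have := hasDerivWithinAt_iff_tendsto_slope.mp hders₀
    rwa [hF₀] at this
  have hev1 : ∀ᶠ s in nhdsWithin s₀ (Set.Icc (0:ℝ) s₀ \ {s₀}), slope h s₀ s < -K := by
    apply hslope.eventually_lt_const
    rw [hKdef]; linarith
  have hev2 : ∀ᶠ s in nhdsWithin s₀ (Set.Icc (0:ℝ) s₀ \ {s₀}), h s < 0 := by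
    have hcont : Filter.Tendsto h (nhdsWithin s₀ (Set.Icc (0:ℝ) s₀ \ {s₀})) (nhds (-1)) := by
      have hct := hders₀.continuousWithinAt
      rw [ContinuousWithinAt, hend] at hct
      exact hct.mono_left (nhdsWithin_mono _ Set.diff_subset)
    exact hcont.eventually_lt_const (by norm_num)
  have hev := hev1.and hev2
  rw [eventually_nhdsWithin_iff, Metric.eventually_nhds_iff] at hev
  obtain ⟨ε, hε, hball⟩ := hev
  obtain ⟨s₁, hs₁def⟩ : ∃ s₁ : ℝ, s₁ = max 0 (s₀ - ε/2) := ⟨_, rfl⟩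
  have hs₁0 : 0 ≤ s₁ := hs₁def ▸ le_max_left _ _
  have hs₁lt : s₁ < s₀ := hs₁def ▸ max_lt hs0pos (by linarith)
  have key : ∀ s ∈ Set.Ico s₁ s₀, h s < 0 ∧ K*(s₀ - s) ≤ 1 + h s := by
    intro s hs
    have hs0 : 0 ≤ s := le_trans hs₁0 hs.1
    have hdist : dist s s₀ < ε := by
      rw [Real.dist_eq, abs_of_nonpos (by linarith [hs.2])]
      have hsub : s₀ - ε/2 ≤ s₁ := hs₁def ▸ le_max_right _ _
      linarith [hs.1]
    have hmem : s ∈ Set.Icc (0:ℝ) s₀ \ {s₀} :=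
      ⟨⟨hs0, hs.2.le⟩, by simp [ne_of_lt hs.2]⟩
    obtain ⟨hsl, hneg⟩ := hball hdist hmem
    refine ⟨hneg, ?_⟩
    have hss : s - s₀ < 0 := by linarith [hs.2]
    rw [slope_def_field, hend] at hsl
    have := (div_lt_iff_of_neg hss).mp hsl
    nlinarith
  -- move to u side
  obtain ⟨u₁, hu₁def⟩ : ∃ u₁ : ℝ, u₁ = c*(s₁-1)/2 := ⟨_, rfl⟩
  have hau₁ : -c/2 ≤ u₁ := by rw [hu₁def]; nlinarith
  have hu₁lt : u₁ < u₀ := by rw [hu₁def, hu₀def]; nlinarith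
  obtain ⟨C, hCdef⟩ : ∃ C : ℝ, C = Real.sqrt (c/(2*K)) := ⟨_, rfl⟩
  have hCpos : 0 < C := hCdef ▸ Real.sqrt_pos.mpr (by positivity)
  have hCC : C * Real.sqrt (2*K/c) = 1 := by
    rw [hCdef, ← Real.sqrt_mul (by positivity)]
    rw [show c/(2*K)*(2*K/c) = 1 by field_simp]
    exact Real.sqrt_one
  -- the key bound on f'
  have hbound : ∀ u ∈ Set.Ioo u₁ u₀, f' u ≤ 0 ∧ -(C/Real.sqrt (u₀ - u)) ≤ f' u := by
    intro u hu
    obtain ⟨s, hsdef⟩ : ∃ s : ℝ, s = (2/c)*u + 1 := ⟨_, rfl⟩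
    have hss₁ : s₁ ≤ s := by
      have hlt' : u₁ < u := hu.1
      rw [hu₁def] at hlt'
      have h2 : s₁ - 1 ≤ 2/c*u := by
        rw [div_mul_eq_mul_div, le_div_iff₀ hc0]; nlinarith
      rw [hsdef]; linarith
    have hslt : s < s₀ := by
      have hlt' : u < u₀ := hu.2
      rw [hu₀def] at hlt'
      have h2 : 2/c*u < s₀ - 1 := by
        rw [div_mul_eq_mul_div, div_lt_iff₀ hc0]; nlinarith
      rw [hsdef]; linarith
    obtain ⟨hneg, hlow⟩ := key s ⟨hss₁, hslt⟩
    have habs : |h s| < 1 := hlt s ⟨le_trans hs₁0 hss₁, hslt⟩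
    obtain ⟨hgt, hlt1⟩ := abs_lt.mp habs
    have hpos2 : 0 < 1 - (h s)^2 := by nlinarith
    have hsqp : 0 < Real.sqrt (1 - (h s)^2) := Real.sqrt_pos.mpr hpos2
    have hy : 0 < u₀ - u := by linarith [hu.2]
    have hs₀s : s₀ - s = 2/c*(u₀ - u) := by
      rw [hsdef, hu₀def]; field_simp; ring
    constructor
    · rw [hf'def, ← hsdef]
      exact div_nonpos_of_nonpos_of_nonneg hneg.le (Real.sqrt_nonneg _)
    · rw [hf'def, ← hsdef]
      have h1h : (2*K/c)*(u₀-u) ≤ 1 - (h s)^2 := by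
        rw [hs₀s] at hlow
        have hx1 : (0:ℝ) ≤ -(h s) * (1 + h s) :=
          mul_nonneg (neg_nonneg.mpr hneg.le) (by linarith)
        have hx2 : -(h s)*(1 + h s) = 1 - (h s)^2 - (1 + h s) := by ring
        have e1 : 2*K/c*(u₀-u) = K*(2/c*(u₀-u)) := by ring
        linarith only [hlow, hx1, hx2.ge, hx2.le, e1.le, e1.ge]
      have hS2 : Real.sqrt ((2*K/c)*(u₀-u)) ≤ Real.sqrt (1 - (h s)^2) :=
        Real.sqrt_le_sqrt h1h
      have hS2pos : 0 < Real.sqrt ((2*K/c)*(u₀-u)) := Real.sqrt_pos.mpr (by positivity)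
      have hns : -(h s) ≤ 1 := by linarith only [hgt]
      have hstep : -(h s) / Real.sqrt (1 - (h s)^2) ≤ 1 / Real.sqrt ((2*K/c)*(u₀-u)) :=
        div_le_div₀ (by norm_num) hns hS2pos hS2
      have h2Kc : (0:ℝ) < 2*K/c := by positivity
      have hprod : Real.sqrt ((2*K/c)*(u₀-u)) * C = Real.sqrt (u₀-u) := by
        rw [Real.sqrt_mul h2Kc.le]
        linear_combination Real.sqrt (u₀-u) * hCC
      have heq : 1 / Real.sqrt ((2*K/c)*(u₀-u)) = C / Real.sqrt (u₀ - u) := by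
        rw [← hprod, mul_comm (Real.sqrt ((2*K/c)*(u₀-u))) C,
          div_mul_cancel_left₀ hCpos.ne', one_div]
      rw [heq, neg_div] at hstep
      linarith
  -- derivative facts on the u side
  have hDerivAt : ∀ x ∈ Set.Ioo u₁ u₀, HasDerivAt f (f' x) x := by
    intro x hx
    exact (hf x ⟨le_trans hau₁ hx.1.le, hx.2⟩).hasDerivAt
      (Ico_mem_nhds_iff.mpr ⟨lt_of_le_of_lt hau₁ hx.1, hx.2⟩)
  have hcontf : ContinuousOn f (Set.Ico u₁ u₀) := by
    intro x hx
    exact ((hf x ⟨le_trans hau₁ hx.1, hx.2⟩).continuousWithinAt).mono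
      (fun y hy => ⟨le_trans hau₁ hy.1, hy.2⟩)
  have hA : AntitoneOn f (Set.Ico u₁ u₀) := by
    apply antitoneOn_of_deriv_nonpos (convex_Ico _ _) hcontf
    · intro x hx
      rw [interior_Ico] at hx
      exact (hDerivAt x hx).differentiableAt.differentiableWithinAt
    · intro x hx
      rw [interior_Ico] at hx
      rw [(hDerivAt x hx).deriv]
      exact (hbound x hx).1
  set G : ℝ → ℝ := fun u => f u - 2*C*Real.sqrt (u₀ - u) with hGdef
  have hGderiv : ∀ x ∈ Set.Ioo u₁ u₀, HasDerivAt G (f' x + C/Real.sqrt (u₀ - x)) x := by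
    intro x hx
    have hy : 0 < u₀ - x := by linarith [hx.2]
    have h1 : HasDerivAt (fun u : ℝ => u₀ - u) (-1) x := by
      simpa using (hasDerivAt_id x).const_sub u₀
    have h2 : HasDerivAt (fun u : ℝ => Real.sqrt (u₀ - u))
        (1/(2*Real.sqrt (u₀ - x)) * (-1)) x :=
      (Real.hasDerivAt_sqrt (ne_of_gt hy)).comp x h1
    have h3 : HasDerivAt G (f' x - 2 * C * (1 / (2 * Real.sqrt (u₀ - x)) * -1)) x := (hDerivAt x hx).sub (h2.const_mul (2*C))
    convert h3 using 1
    have hsq : Real.sqrt (u₀ - x) ≠ 0 := ne_of_gt (Real.sqrt_pos.mpr hy)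
    ring
  have hMG : MonotoneOn G (Set.Ico u₁ u₀) := by
    apply monotoneOn_of_deriv_nonneg (convex_Ico _ _)
    · exact hcontf.sub
        ((continuous_const.mul ((continuous_const.sub continuous_id).sqrt)).continuousOn)
    · intro x hx
      rw [interior_Ico] at hx
      exact (hGderiv x hx).differentiableAt.differentiableWithinAt
    · intro x hx
      rw [interior_Ico] at hx
      rw [(hGderiv x hx).deriv]
      have hb := (hbound x hx).2
      have hsp : (0:ℝ) ≤ C/Real.sqrt (u₀ - x) := by positivity
      linarith
  have hbb : BddBelow (f '' Set.Ioo u₁ u₀) := by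
    refine ⟨f u₁ - 2*C*Real.sqrt (u₀ - u₁), ?_⟩
    rintro y ⟨x, hx, rfl⟩
    have h1 : G u₁ ≤ G x := hMG ⟨le_refl _, hu₁lt⟩ ⟨hx.1.le, hx.2⟩ hx.1.le
    have h2 : (0:ℝ) ≤ 2*C*Real.sqrt (u₀ - x) := by positivity
    simp only [hGdef] at h1
    linarith
  have hne : (Set.Ioo u₁ u₀).Nonempty := Set.nonempty_Ioo.mpr hu₁lt
  exact ⟨_, Filter.Tendsto.mono_left
    (AntitoneOn.tendsto_nhdsWithin_Ioo_left hne (hA.mono Set.Ioo_subset_Ico_self) hbb)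
    (nhdsWithin_mono _ Set.Ico_subset_Iio_self)⟩
end
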